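/- Commutation of the quantum linear forms: Let A = (a_{ij}) be a right-quantum matrix whose entries commute with quantum variables x_1,...,x_r satisfying x_j x_i = q x_i x_j for i < j. Set X_i = Σ_j a_{ij} x_j. Then for 1 ≤ i < j ≤ r, X_j X_i = q X_i X_j. -/

import Mathlib

/-- Number of inversions of a permutation of `Fin r`. -/
def invCount {r : ℕ} (π : Equiv.Perm (Fin r)) : ℕ :=
  (Finset.univ.filter fun p : Fin r × Fin r => p.1 < p.2 ∧ π p.2 < π p.1).card

/-- The quantum determinant of a square matrix over a possibly noncommutative ring:
`det_q(B) = Σ_π (-q)^{-inv(π)} B_{π(1)1} ⋯ B_{π(r)r}` (ordered product). -/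
noncomputable def detq {R : Type*} [Ring R] {r : ℕ} (q : Rˣ)
    (B : Matrix (Fin r) (Fin r) R) : R :=
  ∑ π : Equiv.Perm (Fin r),
    (((-q) ^ (-(invCount π : ℤ)) : Rˣ) : R) * (List.ofFn fun i => B (π i) i).prod

/-- `A` is right-quantum: the entries in each column `q`-commute
(`ca = q·ac`, `db = q·bd`) and every `2 × 2` submatrix `(a b; c d)` satisfies the
cross commutation relation `ad = da + q⁻¹·cb − q·bc`. -/
def RightQuantum {R : Type*} [Ring R] {r : ℕ} (q : Rˣ)
    (A : Matrix (Fin r) (Fin r) R) : Prop :=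
  (∀ j i i' : Fin r, i < i' → A i' j * A i j = (q : R) * (A i j * A i' j)) ∧
  (∀ i i' j j' : Fin r, i < i' → j < j' →
    A i j * A i' j' =
      A i' j' * A i j + ((q⁻¹ : Rˣ) : R) * (A i' j * A i j') - (q : R) * (A i j' * A i' j))

/-- Commutation of the quantum linear forms: if `A` is right-quantum, its entries commute
with quantum variables `x` satisfying `x j * x i = q * (x i * x j)` for `i < j`, and
`X i = Σ_j A i j * x j`, then `X j * X i = q * (X i * X j)` for `i < j`. -/
theorem quantum_linear_forms_commute {R : Type*} [Ring R] {r : ℕ}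
    (q : Rˣ) (hq : ∀ y : R, Commute (q : R) y)
    (A : Matrix (Fin r) (Fin r) R) (hA : RightQuantum q A)
    (x : Fin r → R)
    (hx : ∀ i j : Fin r, i < j → x j * x i = (q : R) * (x i * x j))
    (hax : ∀ i k l : Fin r, Commute (x i) (A k l))
    (X : Fin r → R) (hX : ∀ i, X i = ∑ j, A i j * x j) :
    ∀ i j : Fin r, i < j → X j * X i = (q : R) * (X i * X j) := by
  intro i j hij
  obtain ⟨hcol, hcross⟩ := hA
  have hmove : ∀ (m n k l : Fin r),
      (A m k * x k) * (A n l * x l) = A m k * A n l * (x k * x l) := by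
    intro m n k l
    rw [mul_assoc, mul_assoc, ← mul_assoc (x k), (hax k n l).eq, mul_assoc]
  set F : Fin r × Fin r → R := fun p =>
    A j p.1 * A i p.2 * (x p.1 * x p.2)
      - (q : R) * (A i p.1 * A j p.2 * (x p.1 * x p.2)) with hF
  have hdiag : ∀ k, F (k, k) = 0 := by
    intro k
    simp only [hF]
    rw [hcol k i j hij, mul_assoc, sub_self]
  have hpair : ∀ k l : Fin r, k < l → F (k, l) + F (l, k) = 0 := by
    intro k l hkl
    have key : A j k * A i l - (q : R) * (A i k * A j l)
        + ((q : R) * (A j l * A i k) - (q : R) * ((q : R) * (A i l * A j k))) = 0 := by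
      rw [hcross i j k l hij hkl, mul_sub, mul_add, ← mul_assoc (q : R) ((q⁻¹ : Rˣ) : R),
        Units.mul_inv, one_mul]
      abel
    have c1 : A j l * A i k * ((q : R) * (x k * x l))
        = (q : R) * (A j l * A i k) * (x k * x l) := by
      rw [← mul_assoc, ← (hq (A j l * A i k)).eq]
    have c2 : (q : R) * (A i l * A j k * ((q : R) * (x k * x l)))
        = (q : R) * ((q : R) * (A i l * A j k)) * (x k * x l) := by
      rw [← mul_assoc (A i l * A j k), ← (hq (A i l * A j k)).eq, ← mul_assoc, ← mul_assoc]
    have hswap : x l * x k = (q : R) * (x k * x l) := hx k l hkl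
    simp only [hF]
    rw [hswap, c1, c2, ← mul_assoc (q : R) (A i k * A j l)]
    calc A j k * A i l * (x k * x l) - (q : R) * (A i k * A j l) * (x k * x l)
          + ((q : R) * (A j l * A i k) * (x k * x l)
            - (q : R) * ((q : R) * (A i l * A j k)) * (x k * x l))
        = (A j k * A i l - (q : R) * (A i k * A j l)
            + ((q : R) * (A j l * A i k) - (q : R) * ((q : R) * (A i l * A j k))))
            * (x k * x l) := by
          rw [add_mul, sub_mul, sub_mul]
      _ = 0 := by rw [key, zero_mul]
  have hsum : X j * X i - (q : R) * (X i * X j) = ∑ p : Fin r × Fin r, F p := by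
    rw [hX i, hX j, Finset.sum_mul_sum, Finset.sum_mul_sum, Finset.mul_sum]
    simp only [Finset.mul_sum, hmove]
    rw [Fintype.sum_prod_type, ← Finset.sum_sub_distrib]
    exact Finset.sum_congr rfl fun k _ => (Finset.sum_sub_distrib _ _).symm
  rw [← sub_eq_zero, hsum]
  refine Finset.sum_ninvolution (fun p => (p.2, p.1)) ?_ ?_ (fun p => Finset.mem_univ _)
    (fun p => rfl)
  · rintro ⟨k, l⟩
    rcases lt_trichotomy k l with h | h | h
    · exact hpair k l h
    · subst h
      rw [hdiag, add_zero]
    · rw [add_comm]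
      exact hpair l k h
  · rintro ⟨k, l⟩ hne heq
    have : l = k := (Prod.mk.injEq _ _ _ _).mp heq |>.1
    subst this
    exact hne (hdiag _)
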